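/- arXiv:2510.14458 — 3 statements merged into one kernel-verified Lean document; each statement's English description precedes it below -/
import Mathlib

section
/- Let {a_k}_{k∈ℤ} with a_k = 0 for k ≤ 0, a_k ∈ S_{α,β} = {z ∈ ℂ : |arg z − α| ≤ β} for k ≥ 1 (for some 0 ≤ α < 2π, 0 ≤ β < π/2), and suppose {a_k}_{k≥1} ∈ GM, i.e., ∑_{k=n}^{2n}|a_k − a_{k+1}| ≤ (C/n)∑_{k=n/λ}^{λn}|a_k| for all n ≥ 1, for some C > 0, λ > 1. Then {a_k}_{k∈ℤ} ∈ GM-bar: for all n ≥ 0, ∑_{⌊2^{n−1}⌋ ≤ |m| < 2^n}|Δa_m| ≤ C' sup_{k≥0} min(1,2^{k−n}) â_{2^k}, where â_{2^k} = sup_{2^k ≤ |m| < 2^{k+1}} (1/(|m|+1))|∑_{j=0}^{m} a_j|. -/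
open scoped Real ENNReal BigOperators

/-- The symmetric difference `|Δa_m|`. -/
noncomputable def symDiff (a : ℤ → ℂ) (m : ℤ) : ℝ :=
  if 0 < m then ‖a m - a (m + 1)‖
  else if m < 0 then ‖a m - a (m - 1)‖
  else ‖a 0 - a 1‖ + ‖a 0 - a (-1)‖

/-- `⌊2^{k-1}⌋`. -/
def dyadLo (k : ℕ) : ℤ := if k = 0 then 0 else 2 ^ (k - 1)

/-- `Θ_n(a) = ∑_{⌊2^{n-1}⌋ ≤ |m| < 2^n} |Δa_m|`. -/
noncomputable def Theta (a : ℤ → ℂ) (k : ℕ) : ℝ :=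
  ∑ m ∈ (Finset.Icc (-(2 ^ k : ℤ) + 1) ((2 ^ k : ℤ) - 1)).filter
      (fun m => dyadLo k ≤ |m|), symDiff a m

/-- The partial sum `∑_{j=0}^{m} a_j`, interpreted as `∑_{j=m}^{0} a_j`
when `m < 0`. -/
noncomputable def psum (a : ℤ → ℂ) (m : ℤ) : ℂ :=
  ∑ j ∈ Finset.Icc (min m 0) (max m 0), a j

/-- `â_{2^k} = sup_{2^k ≤ |m| < 2^{k+1}} (1/(|m|+1)) |∑_{j=0}^{m} a_j|`. -/
noncomputable def hatAvg (a : ℤ → ℂ) (k : ℕ) : ℝ≥0∞ :=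
  ⨆ (m : ℤ) (_ : (2 ^ k : ℤ) ≤ |m| ∧ |m| < 2 ^ (k + 1)),
    ENNReal.ofReal (‖psum a m‖ / ((m.natAbs : ℝ) + 1))

/-- The class `GM-bar` with constant `C`: for every `n ≥ 0`,
`∑_{⌊2^{n-1}⌋ ≤ |m| < 2^n} |Δa_m| ≤ C · sup_{k≥0} min(1, 2^{k-n}) â_{2^k}`. -/
def GMBarWith (C : ℝ) (a : ℤ → ℂ) : Prop :=
  ∀ n : ℕ, ENNReal.ofReal (Theta a n) ≤
    ENNReal.ofReal C *
      ⨆ k : ℕ, min 1 ((2 : ℝ≥0∞) ^ ((k : ℝ) - (n : ℝ))) * hatAvg a k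

/-- The class `GM-bar`. -/
def GMBar (a : ℤ → ℂ) : Prop := ∃ C : ℝ, 0 < C ∧ GMBarWith C a

/-- The class `GM` for the one-sided part `{a_k}_{k≥1}`: there exist `C > 0`
and `λ > 1` with `∑_{k=n}^{2n} |a_k - a_{k+1}| ≤ (C/n) ∑_{⌈n/λ⌉ ≤ k ≤ ⌊λn⌋} |a_k|`
for all `n ≥ 1`. -/
def GMseq (a : ℤ → ℂ) : Prop :=
  ∃ C : ℝ, 0 < C ∧ ∃ lam : ℝ, 1 < lam ∧ ∀ n : ℕ, 1 ≤ n →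
    ∑ k ∈ Finset.Icc (n : ℤ) (2 * n), ‖a k - a (k + 1)‖ ≤
      (C / n) * ∑ k ∈ Finset.Icc ⌈(n : ℝ) / lam⌉ ⌊lam * (n : ℝ)⌋, ‖a k‖

lemma sector_sum (α β : ℝ) (hβ1 : β < π / 2) (a : ℤ → ℂ)
    (hsec : ∀ k : ℤ, 1 ≤ k → ∃ r θ : ℝ, 0 ≤ r ∧ |θ - α| ≤ β ∧
      a k = (r : ℂ) * Complex.exp ((θ : ℂ) * Complex.I))
    (w : Finset ℤ) (hw : ∀ k ∈ w, 1 ≤ k) :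
    Real.cos β * ∑ k ∈ w, ‖a k‖ ≤ ‖∑ k ∈ w, a k‖ := by
  have key : Real.cos β * ∑ k ∈ w, ‖a k‖ ≤
      (Complex.exp (-(α : ℂ) * Complex.I) * ∑ k ∈ w, a k).re := by
    rw [Finset.mul_sum, Finset.mul_sum]
    rw [Complex.re_sum]
    apply Finset.sum_le_sum
    intro k hk
    obtain ⟨r, θ, hr, hθ, hak⟩ := hsec k (hw k hk)
    have : Complex.exp (-(α : ℂ) * Complex.I) * a k =
        (r : ℂ) * Complex.exp (((θ - α : ℝ) : ℂ) * Complex.I) := by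
      rw [hak, mul_left_comm, ← Complex.exp_add]
      push_cast
      ring_nf
    rw [this]
    have hnorm : ‖a k‖ = r := by
      rw [hak]
      simp [Complex.norm_exp_ofReal_mul_I, abs_of_nonneg hr]
    rw [hnorm]
    have hre : ((r : ℂ) * Complex.exp (((θ - α : ℝ) : ℂ) * Complex.I)).re
        = r * Real.cos (θ - α) := by
      rw [Complex.re_ofReal_mul, Complex.exp_ofReal_mul_I_re]
    rw [hre]
    have : Real.cos β ≤ Real.cos (θ - α) := by
      rw [← Real.cos_abs (θ - α)]
      apply Real.cos_le_cos_of_nonneg_of_le_pi (abs_nonneg _) (by linarith [Real.pi_pos]) hθ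
    nlinarith
  calc Real.cos β * ∑ k ∈ w, ‖a k‖ ≤ _ := key
    _ ≤ ‖Complex.exp (-(α : ℂ) * Complex.I) * ∑ k ∈ w, a k‖ := Complex.re_le_norm _
    _ = ‖∑ k ∈ w, a k‖ := by
        rw [norm_mul]
        have : ‖Complex.exp (-(α : ℂ) * Complex.I)‖ = 1 := by
          have : (-(α:ℂ) * Complex.I) = ((-α : ℝ):ℂ) * Complex.I := by push_cast; ring
          rw [this]; exact Complex.norm_exp_ofReal_mul_I _
        rw [this, one_mul]

lemma psum_of_nonneg (a : ℤ → ℂ) (m : ℤ) (hm : 0 ≤ m) :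
    psum a m = ∑ j ∈ Finset.Icc 0 m, a j := by
  unfold psum
  rw [min_eq_right hm, max_eq_left hm]

lemma Icc_zero_eq_Ioc (x : ℤ) : Finset.Icc (0:ℤ) x = Finset.Ioc (-1) x := by
  ext j; simp only [Finset.mem_Icc, Finset.mem_Ioc]; omega

lemma telescope (a : ℤ → ℂ) (c d : ℤ) (hc : 1 ≤ c) (hcd : c - 1 ≤ d) :
    ∑ k ∈ Finset.Icc c d, a k = psum a d - psum a (c - 1) := by
  rw [psum_of_nonneg a d (by linarith), psum_of_nonneg a (c-1) (by linarith)]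
  have h1 : Finset.Icc c d = Finset.Ioc (c-1) d := by
    ext j; simp only [Finset.mem_Icc, Finset.mem_Ioc]; omega
  rw [h1, Icc_zero_eq_Ioc, Icc_zero_eq_Ioc]
  rw [eq_sub_iff_add_eq, add_comm]
  rw [← Finset.sum_union (by rw [Finset.disjoint_left]; intro x hx hx'; simp only [Finset.mem_Ioc] at hx hx'; omega)]
  rw [Finset.Ioc_union_Ioc_eq_Ioc (by linarith : (-1:ℤ) ≤ c - 1) hcd]

lemma le_hatAvg (a : ℤ → ℂ) (j : ℕ) (m : ℤ) (h1 : (2:ℤ)^j ≤ m) (h2 : m < 2^(j+1)) :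
    ENNReal.ofReal (‖psum a m‖ / ((m.natAbs : ℝ) + 1)) ≤ hatAvg a j := by
  have hm : 0 < m := lt_of_lt_of_le (by positivity) h1
  have habs : |m| = m := abs_of_pos hm
  exact le_iSup₂ (f := fun (m : ℤ) (_ : (2 ^ j : ℤ) ≤ |m| ∧ |m| < 2 ^ (j + 1)) =>
    ENNReal.ofReal (‖psum a m‖ / ((m.natAbs : ℝ) + 1))) m ⟨by rw [habs]; exact h1, by rw [habs]; exact h2⟩

lemma psum_le (a : ℤ → ℂ) (j : ℕ) (m : ℤ) (h1 : (2:ℤ)^j ≤ m) (h2 : m < 2^(j+1)) :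
    ENNReal.ofReal ‖psum a m‖ ≤ ENNReal.ofReal ((m.natAbs : ℝ) + 1) * hatAvg a j := by
  have h := le_hatAvg a j m h1 h2
  have hpos : (0:ℝ) < (m.natAbs : ℝ) + 1 := by positivity
  calc ENNReal.ofReal ‖psum a m‖
      = ENNReal.ofReal ((m.natAbs : ℝ) + 1) * ENNReal.ofReal (‖psum a m‖ / ((m.natAbs : ℝ) + 1)) := by
        rw [← ENNReal.ofReal_mul (le_of_lt hpos)]
        rw [mul_div_cancel₀ _ (ne_of_gt hpos)]
    _ ≤ _ := by exact mul_le_mul_right h _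

/-- If `a_k = 0` for `k ≤ 0`, the values `a_k` for `k ≥ 1` lie in a sector
`S_{α,β}` with `0 ≤ α < 2π`, `0 ≤ β < π/2`, and `{a_k}_{k≥1} ∈ GM`, then the
two-sided sequence `{a_k}_{k∈ℤ}` belongs to `GM-bar`. -/
theorem sector_GM_subset_GMbar (α β : ℝ) (hα0 : 0 ≤ α) (hα1 : α < 2 * π)
    (hβ0 : 0 ≤ β) (hβ1 : β < π / 2) (a : ℤ → ℂ)
    (h0 : ∀ k : ℤ, k ≤ 0 → a k = 0)
    (hsec : ∀ k : ℤ, 1 ≤ k → ∃ r θ : ℝ, 0 ≤ r ∧ |θ - α| ≤ β ∧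
      a k = (r : ℂ) * Complex.exp ((θ : ℂ) * Complex.I))
    (hgm : GMseq a) :
    GMBar a := by
  obtain ⟨C₀, hC₀, lam, hlam, hGM⟩ := hgm
  have hπ := Real.pi_pos
  have hcos : 0 < Real.cos β :=
    Real.cos_pos_of_mem_Ioo ⟨by linarith, hβ1⟩
  set B : ℝ := 4 * C₀ * lam / Real.cos β with hB
  have hBpos : 0 < B := by positivity
  refine ⟨2 * B + 2, by positivity, ?_⟩
  intro n
  set S : ℝ≥0∞ := ⨆ k : ℕ, min 1 ((2 : ℝ≥0∞) ^ ((k : ℝ) - (n : ℝ))) * hatAvg a k with hS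
  -- the key per-endpoint estimate
  have key : ∀ x : ℤ, 1 ≤ x → (x : ℝ) ≤ lam * (2:ℝ)^n →
      ENNReal.ofReal (C₀ / ((2:ℝ)^(n-1) * Real.cos β)) * ENNReal.ofReal ‖psum a x‖ ≤
        ENNReal.ofReal B * S := by
    intro x hx1 hxle
    set j : ℕ := Nat.log 2 x.toNat with hj
    have hxt : 1 ≤ x.toNat := by omega
    have h2j : (2:ℤ)^j ≤ x := by
      have := Nat.pow_log_le_self 2 (show x.toNat ≠ 0 by omega)
      have : ((2^j : ℕ) : ℤ) ≤ (x.toNat : ℤ) := by exact_mod_cast this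
      push_cast at this
      omega
    have hj2 : x < (2:ℤ)^(j+1) := by
      have := Nat.lt_pow_succ_log_self (show 1 < 2 by norm_num) x.toNat
      have : ((x.toNat : ℤ)) < ((2^(j+1) : ℕ) : ℤ) := by exact_mod_cast this
      push_cast at this
      omega
    have h2jr : (2:ℝ)^j ≤ lam * 2^n := by
      have : ((2:ℤ)^j : ℝ) ≤ (x : ℝ) := by exact_mod_cast h2j
      push_cast at this
      linarith
    have hmin : ENNReal.ofReal ((2:ℝ)^j / ((2:ℝ)^n * lam)) ≤
        min 1 ((2 : ℝ≥0∞) ^ ((j : ℝ) - (n : ℝ))) := by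
      refine le_min ?_ ?_
      · rw [show (1:ℝ≥0∞) = ENNReal.ofReal 1 by simp]
        apply ENNReal.ofReal_le_ofReal
        rw [div_le_one (by positivity)]
        nlinarith [pow_pos (show (0:ℝ) < 2 by norm_num) n]
      · have h2 : (2 : ℝ≥0∞) = ENNReal.ofReal 2 := by
          rw [ENNReal.ofReal_ofNat]
        rw [h2, ENNReal.ofReal_rpow_of_pos (by norm_num)]
        apply ENNReal.ofReal_le_ofReal
        rw [Real.rpow_sub (by norm_num), Real.rpow_natCast, Real.rpow_natCast]
        rw [div_le_div_iff₀ (by positivity) (by positivity)]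
        nlinarith [mul_pos (pow_pos (show (0:ℝ) < 2 by norm_num) j)
          (pow_pos (show (0:ℝ) < 2 by norm_num) n)]
    have hnat : ((x.natAbs : ℝ) + 1) ≤ 2 * (2:ℝ)^j := by
      have h1 : (x.natAbs : ℤ) + 1 ≤ (2:ℤ)^(j+1) := by
        rw [Int.natAbs_of_nonneg (by omega : (0:ℤ) ≤ x)]
        omega
      have h2 : ((x.natAbs : ℝ)) + 1 ≤ ((2:ℝ))^(j+1) := by exact_mod_cast h1
      calc ((x.natAbs : ℝ)) + 1 ≤ (2:ℝ)^(j+1) := h2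
        _ = 2 * (2:ℝ)^j := by ring
    calc ENNReal.ofReal (C₀ / ((2:ℝ)^(n-1) * Real.cos β)) * ENNReal.ofReal ‖psum a x‖
        ≤ ENNReal.ofReal (C₀ / ((2:ℝ)^(n-1) * Real.cos β)) *
            (ENNReal.ofReal ((x.natAbs : ℝ) + 1) * hatAvg a j) :=
          mul_le_mul_right (psum_le a j x h2j hj2) _
      _ = ENNReal.ofReal (C₀ / ((2:ℝ)^(n-1) * Real.cos β) * ((x.natAbs : ℝ) + 1)) * hatAvg a j := by
          rw [← mul_assoc, ← ENNReal.ofReal_mul (by positivity)]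
      _ ≤ ENNReal.ofReal (B * ((2:ℝ)^j / ((2:ℝ)^n * lam))) * hatAvg a j := by
          apply mul_le_mul_left
          apply ENNReal.ofReal_le_ofReal
          have hpow : (2:ℝ)^n ≤ 2 * 2^(n-1) := by
            cases n with
            | zero => norm_num
            | succ m => rw [Nat.add_sub_cancel, pow_succ]; exact le_of_eq (mul_comm _ _)
          calc C₀ / ((2:ℝ)^(n-1) * Real.cos β) * ((x.natAbs : ℝ) + 1)
              ≤ C₀ / ((2:ℝ)^(n-1) * Real.cos β) * (2 * 2^j) :=
                mul_le_mul_of_nonneg_left hnat (by positivity)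
            _ ≤ B * ((2:ℝ)^j / ((2:ℝ)^n * lam)) := by
                have hlam0 : (0:ℝ) < lam := by linarith
                have h1 : B * ((2:ℝ)^j / ((2:ℝ)^n * lam)) =
                    4*C₀*(2:ℝ)^j/((2:ℝ)^n*Real.cos β) := by
                  rw [hB]; field_simp
                rw [h1, div_mul_eq_mul_div, div_le_div_iff₀ (by positivity) (by positivity)]
                nlinarith [mul_le_mul_of_nonneg_left hpow
                  (by positivity : (0:ℝ) ≤ 2*C₀*(2:ℝ)^j*Real.cos β)]
      _ = ENNReal.ofReal B * (ENNReal.ofReal ((2:ℝ)^j / ((2:ℝ)^n * lam)) * hatAvg a j) := by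
          rw [ENNReal.ofReal_mul (le_of_lt hBpos), mul_assoc]
      _ ≤ ENNReal.ofReal B * (min 1 ((2 : ℝ≥0∞) ^ ((j : ℝ) - (n : ℝ))) * hatAvg a j) :=
          mul_le_mul_right (mul_le_mul_left hmin _) _
      _ ≤ ENNReal.ofReal B * S := by
          apply mul_le_mul_right
          exact le_iSup (fun k : ℕ => min 1 ((2:ℝ≥0∞)^((k:ℝ)-(n:ℝ))) * hatAvg a k) j
  rcases Nat.eq_zero_or_pos n with hn | hn
  · -- n = 0
    subst hn
    have ha0 : a 0 = 0 := h0 0 le_rfl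
    have ham : a (-1) = 0 := h0 (-1) (by norm_num)
    have hTh : Theta a 0 = ‖a 1‖ := by
      unfold Theta
      have hset : Finset.Icc (-(2 ^ 0 : ℤ) + 1) ((2 ^ 0 : ℤ) - 1) = {0} := by
        norm_num
      rw [hset]
      have : ({0} : Finset ℤ).filter (fun m => dyadLo 0 ≤ |m|) = {0} := by
        apply Finset.filter_true_of_mem
        intro x hx
        simp only [Finset.mem_singleton] at hx
        subst hx
        simp [dyadLo]
      rw [this, Finset.sum_singleton]
      unfold symDiff
      norm_num [ha0, ham]
    rw [hTh]
    have hps1 : psum a 1 = a 1 := by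
      rw [psum_of_nonneg a 1 (by norm_num)]
      rw [show Finset.Icc (0:ℤ) 1 = {0, 1} by ext x; simp [Finset.mem_Icc]; omega]
      rw [Finset.sum_pair (by norm_num : (0:ℤ) ≠ 1), ha0, zero_add]
    have h1 : ENNReal.ofReal (‖a 1‖ / 2) ≤ hatAvg a 0 := by
      have h := le_hatAvg a 0 1 (by norm_num) (by norm_num)
      rw [hps1] at h
      convert h using 3
      norm_num
    have hterm : hatAvg a 0 ≤ S := by
      have heq : min 1 ((2 : ℝ≥0∞) ^ (((0:ℕ) : ℝ) - ((0:ℕ) : ℝ))) * hatAvg a 0 = hatAvg a 0 := by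
        norm_num
      calc hatAvg a 0 = min 1 ((2 : ℝ≥0∞) ^ (((0:ℕ) : ℝ) - ((0:ℕ) : ℝ))) * hatAvg a 0 := heq.symm
        _ ≤ S := le_iSup (fun k : ℕ => min 1 ((2:ℝ≥0∞)^((k:ℝ)-((0:ℕ):ℝ))) * hatAvg a k) 0
    calc ENNReal.ofReal ‖a 1‖ = ENNReal.ofReal (2 * (‖a 1‖ / 2)) := by congr 1; ring
      _ = ENNReal.ofReal 2 * ENNReal.ofReal (‖a 1‖ / 2) := ENNReal.ofReal_mul (by norm_num)
      _ ≤ ENNReal.ofReal (2 * B + 2) * S := by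
          apply mul_le_mul' (ENNReal.ofReal_le_ofReal (by linarith))
          exact le_trans h1 hterm
  · -- n ≥ 1
    set N : ℕ := 2 ^ (n - 1) with hN
    have hN1 : 1 ≤ N := Nat.one_le_two_pow
    have hNcast : ((N : ℕ) : ℝ) = (2:ℝ)^(n-1) := by push_cast [hN]; ring
    have h2n : ((2:ℤ)^n) = 2 * (N : ℤ) := by
      rw [hN]
      push_cast
      rw [← pow_succ']
      congr 1
      omega
    -- Step A : Theta ≤ GM left side
    have hTheta : Theta a n ≤ ∑ k ∈ Finset.Icc ((N:ℕ) : ℤ) (2 * (N:ℕ)), ‖a k - a (k + 1)‖ := by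
      unfold Theta
      have hdl : dyadLo n = (N : ℤ) := by
        unfold dyadLo
        rw [if_neg (by omega)]
        push_cast [hN]
        ring
      set s := (Finset.Icc (-(2 ^ n : ℤ) + 1) ((2 ^ n : ℤ) - 1)).filter
        (fun m => dyadLo n ≤ |m|) with hs
      have hstep : ∑ m ∈ s, symDiff a m = ∑ m ∈ s.filter (fun m => 0 < m), symDiff a m := by
        symm
        apply Finset.sum_subset (Finset.filter_subset _ _)
        intro x hx hnx
        have hxs := hx
        rw [hs, Finset.mem_filter, Finset.mem_Icc, hdl] at hxs
        rw [Finset.mem_filter] at hnx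
        have hx0 : x < 0 := by
          rcases lt_trichotomy x 0 with h | h | h
          · exact h
          · exfalso; subst h; simp at hxs; omega
          · exact absurd ⟨hx, h⟩ hnx
        unfold symDiff
        rw [if_neg (by omega), if_pos hx0, h0 x (by omega), h0 (x - 1) (by omega)]
        simp
      rw [hstep]
      have hcongr : ∑ m ∈ s.filter (fun m => 0 < m), symDiff a m =
          ∑ m ∈ s.filter (fun m => 0 < m), ‖a m - a (m + 1)‖ := by
        apply Finset.sum_congr rfl
        intro x hx
        rw [Finset.mem_filter] at hx
        unfold symDiff
        rw [if_pos hx.2]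
      rw [hcongr]
      apply Finset.sum_le_sum_of_subset_of_nonneg
      · intro x hx
        rw [Finset.mem_filter] at hx
        obtain ⟨hx1, hx2⟩ := hx
        rw [hs, Finset.mem_filter, Finset.mem_Icc, hdl] at hx1
        rw [Finset.mem_Icc]
        have habs : |x| = x := abs_of_pos hx2
        push_cast
        omega
      · intro _ _ _; positivity
    -- Step B : GM
    have hGMN := hGM N hN1
    -- Step C : sector estimate
    set c : ℤ := ⌈((N:ℕ) : ℝ) / lam⌉ with hc
    set d : ℤ := ⌊lam * ((N:ℕ) : ℝ)⌋ with hd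
    have hlam0 : (0:ℝ) < lam := by linarith
    have hNr : (1:ℝ) ≤ ((N:ℕ):ℝ) := by exact_mod_cast hN1
    have hc1 : 1 ≤ c := by
      have : 0 < c := Int.ceil_pos.mpr (by positivity)
      omega
    have hcN : c ≤ (N : ℤ) := by
      rw [hc]
      apply Int.ceil_le.mpr
      push_cast
      exact div_le_self (by linarith) (le_of_lt hlam)
    have hNd : (N : ℤ) ≤ d := by
      rw [hd]
      apply Int.le_floor.mpr
      push_cast
      nlinarith
    have hdr : (d : ℝ) ≤ lam * ((N:ℕ):ℝ) := Int.floor_le _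
    have hsector : Real.cos β * ∑ k ∈ Finset.Icc c d, ‖a k‖ ≤
        ‖psum a d‖ + ‖psum a (c - 1)‖ := by
      calc Real.cos β * ∑ k ∈ Finset.Icc c d, ‖a k‖
          ≤ ‖∑ k ∈ Finset.Icc c d, a k‖ := by
            apply sector_sum α β hβ1 a hsec
            intro k hk
            rw [Finset.mem_Icc] at hk
            omega
        _ = ‖psum a d - psum a (c - 1)‖ := by rw [telescope a c d hc1 (by omega)]
        _ ≤ ‖psum a d‖ + ‖psum a (c - 1)‖ := norm_sub_le _ _
    -- combine the real chain
    have hreal : Theta a n ≤ C₀ / ((2:ℝ)^(n-1) * Real.cos β) * (‖psum a d‖ + ‖psum a (c - 1)‖) := by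
      have hsum_nonneg : (0:ℝ) ≤ ∑ k ∈ Finset.Icc c d, ‖a k‖ :=
        Finset.sum_nonneg fun _ _ => norm_nonneg _
      have h2 : ∑ k ∈ Finset.Icc c d, ‖a k‖ ≤ (‖psum a d‖ + ‖psum a (c - 1)‖) / Real.cos β := by
        rw [le_div_iff₀ hcos]
        linarith [hsector]
      calc Theta a n ≤ ∑ k ∈ Finset.Icc ((N:ℕ) : ℤ) (2 * (N:ℕ)), ‖a k - a (k + 1)‖ := hTheta
        _ ≤ (C₀ / (N:ℕ)) * ∑ k ∈ Finset.Icc c d, ‖a k‖ := hGMN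
        _ ≤ (C₀ / (N:ℕ)) * ((‖psum a d‖ + ‖psum a (c - 1)‖) / Real.cos β) := by
            exact mul_le_mul_of_nonneg_left h2 (by positivity)
        _ = C₀ / ((2:ℝ)^(n-1) * Real.cos β) * (‖psum a d‖ + ‖psum a (c - 1)‖) := by
            rw [← hNcast]
            field_simp
    -- lift to ENNReal and finish
    have hfactor : (0:ℝ) ≤ C₀ / ((2:ℝ)^(n-1) * Real.cos β) := by positivity
    have hTd : ENNReal.ofReal (C₀ / ((2:ℝ)^(n-1) * Real.cos β)) * ENNReal.ofReal ‖psum a d‖ ≤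
        ENNReal.ofReal B * S := by
      apply key d (by omega)
      have h1 : (2:ℝ)^(n-1) ≤ (2:ℝ)^n := by
        apply pow_le_pow_right₀ (by norm_num)
        omega
      rw [hNcast] at hdr
      nlinarith
    have hTc : ENNReal.ofReal (C₀ / ((2:ℝ)^(n-1) * Real.cos β)) * ENNReal.ofReal ‖psum a (c-1)‖ ≤
        ENNReal.ofReal B * S := by
      rcases eq_or_lt_of_le hc1 with h | h
      · have : psum a (c - 1) = 0 := by
          rw [← h]
          norm_num [psum_of_nonneg a 0 le_rfl, h0 0 le_rfl]
        rw [this]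
        simp
      · apply key (c - 1) (by omega)
        have h1 : (2:ℝ)^(n-1) ≤ (2:ℝ)^n := by
          apply pow_le_pow_right₀ (by norm_num)
          omega
        have hcr : ((c:ℝ)) ≤ ((N:ℕ):ℝ) := by exact_mod_cast hcN
        push_cast
        rw [hNcast] at hcr
        nlinarith
    calc ENNReal.ofReal (Theta a n)
        ≤ ENNReal.ofReal (C₀ / ((2:ℝ)^(n-1) * Real.cos β) * (‖psum a d‖ + ‖psum a (c - 1)‖)) :=
          ENNReal.ofReal_le_ofReal hreal
      _ = ENNReal.ofReal (C₀ / ((2:ℝ)^(n-1) * Real.cos β)) * ENNReal.ofReal ‖psum a d‖ +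
          ENNReal.ofReal (C₀ / ((2:ℝ)^(n-1) * Real.cos β)) * ENNReal.ofReal ‖psum a (c-1)‖ := by
          rw [ENNReal.ofReal_mul hfactor, ENNReal.ofReal_add (norm_nonneg _) (norm_nonneg _),
            mul_add]
      _ ≤ ENNReal.ofReal B * S + ENNReal.ofReal B * S := add_le_add hTd hTc
      _ = ENNReal.ofReal (B + B) * S := by
          rw [ENNReal.ofReal_add (le_of_lt hBpos) (le_of_lt hBpos), add_mul]
      _ ≤ ENNReal.ofReal (2 * B + 2) * S := by
          apply mul_le_mul_left
          apply ENNReal.ofReal_le_ofReal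
          linarith
end

section
/- There exists a sequence {a_k}_{k∈ℤ} with a_k = 0 for k ≤ 0 which belongs to GM-bar but whose restriction {a_k}_{k≥1} does not belong to the class GM. Concretely, let a_k = 0 for k ≤ 15, and for n ≥ 4 and 2^n ≤ k < 2^{n+1}: a_k = 2^{−n} if k is odd; a_k = 0 if k is even and 2^n ≤ k < 2^n + ⌊√n⌋; a_k = 2^{−n} if k is even and 2^n + ⌊√n⌋ ≤ k < 2^{n+1}. Then {a_k}_{k∈ℤ} ∈ GM-bar but {a_k}_{k≥1} ∉ GM. -/
open scoped ENNReal BigOperators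

/-- The explicit sequence: `a_k = 0` for `k ≤ 15`; for `n ≥ 4` and
`2^n ≤ k < 2^{n+1}`: `a_k = 2^{-n}` if `k` is odd, `a_k = 0` if `k` is even
and `2^n ≤ k < 2^n + ⌊√n⌋`, and `a_k = 2^{-n}` otherwise. -/
noncomputable def exSeq : ℤ → ℂ := fun k =>
  if k ≤ 15 then 0
  else
    let n := Nat.log 2 k.toNat
    if Odd k then ((2 : ℂ) ^ n)⁻¹
    else if k < (2 ^ n : ℤ) + (Nat.sqrt n : ℤ) then 0
    else ((2 : ℂ) ^ n)⁻¹

lemma exSeq_zero {j : ℤ} (h : j ≤ 15) : exSeq j = 0 := by simp [exSeq, h]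

lemma log_eq {N : ℕ} (hN : 4 ≤ N) {k : ℤ} (h1 : (2:ℤ)^N ≤ k) (h2 : k < (2:ℤ)^(N+1)) :
    Nat.log 2 k.toNat = N := by
  have hk0 : (0:ℤ) ≤ k := le_trans (by positivity) h1
  apply Nat.log_eq_of_pow_le_of_lt_pow
  · have : ((2:ℤ)^N) = ((2^N : ℕ) : ℤ) := by push_cast; ring
    omega
  · have : ((2:ℤ)^(N+1)) = ((2^(N+1) : ℕ) : ℤ) := by push_cast; ring
    omega

lemma exSeq_eq {N : ℕ} (hN : 4 ≤ N) {k : ℤ} (h1 : (2:ℤ)^N ≤ k) (h2 : k < (2:ℤ)^(N+1)) :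
    exSeq k = if Odd k then ((2 : ℂ) ^ N)⁻¹
      else if k < (2 ^ N : ℤ) + (Nat.sqrt N : ℤ) then 0 else ((2 : ℂ) ^ N)⁻¹ := by
  have h15 : ¬ k ≤ 15 := by
    have : (2:ℤ)^4 ≤ (2:ℤ)^N := pow_le_pow_right₀ (by norm_num) hN
    norm_num at this; omega
  simp only [exSeq, if_neg h15]
  rw [log_eq hN h1 h2]

lemma exSeq_odd {N : ℕ} (hN : 4 ≤ N) {k : ℤ} (h1 : (2:ℤ)^N ≤ k) (h2 : k < (2:ℤ)^(N+1))
    (ho : Odd k) : exSeq k = ((2 : ℂ) ^ N)⁻¹ := by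
  rw [exSeq_eq hN h1 h2, if_pos ho]

lemma exSeq_even_lo {N : ℕ} (hN : 4 ≤ N) {k : ℤ} (h1 : (2:ℤ)^N ≤ k) (h2 : k < (2:ℤ)^(N+1))
    (he : ¬ Odd k) (hlo : k < (2 ^ N : ℤ) + (Nat.sqrt N : ℤ)) : exSeq k = 0 := by
  rw [exSeq_eq hN h1 h2, if_neg he, if_pos hlo]

lemma exSeq_even_hi {N : ℕ} (hN : 4 ≤ N) {k : ℤ} (h1 : (2:ℤ)^N ≤ k) (h2 : k < (2:ℤ)^(N+1))
    (he : ¬ Odd k) (hhi : ¬ k < (2 ^ N : ℤ) + (Nat.sqrt N : ℤ)) : exSeq k = ((2 : ℂ) ^ N)⁻¹ := by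
  rw [exSeq_eq hN h1 h2, if_neg he, if_neg hhi]

lemma exSeq_cases (k : ℤ) :
    exSeq k = 0 ∨ exSeq k = ((2 : ℂ) ^ (Nat.log 2 k.toNat))⁻¹ := by
  unfold exSeq; split_ifs <;> (try dsimp only) <;> (try split_ifs) <;> tauto

lemma inv_pow_val (M : ℕ) : ((2 : ℂ) ^ M)⁻¹ = (((2:ℝ)^M)⁻¹ : ℝ) := by push_cast; ring

lemma exSeq_re_nonneg (k : ℤ) : 0 ≤ (exSeq k).re := by
  rcases exSeq_cases k with h | h <;> rw [h]
  · simp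
  · rw [inv_pow_val, Complex.ofReal_re]; positivity

lemma norm_inv_pow (M : ℕ) : ‖((2:ℂ)^M)⁻¹‖ = ((2:ℝ)^M)⁻¹ := by simp

lemma exSeq_norm (k : ℤ) : ‖exSeq k‖ = (exSeq k).re := by
  rcases exSeq_cases k with h | h <;> rw [h]
  · simp
  · rw [norm_inv_pow, inv_pow_val, Complex.ofReal_re]

lemma exSeq_norm_le_two_div {k : ℤ} (hk : 1 ≤ k) : ‖exSeq k‖ ≤ 2 / (k:ℝ) := by
  rcases exSeq_cases k with h | h <;> rw [h]
  · simp; positivity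
  · set M := Nat.log 2 k.toNat
    rw [norm_inv_pow]
    have h1 : k.toNat < 2 ^ (M + 1) := Nat.lt_pow_succ_log_self (by norm_num) _
    have hk' : (k:ℝ) = (k.toNat : ℝ) := by
      exact_mod_cast (Int.toNat_of_nonneg (by omega : (0:ℤ) ≤ k)).symm
    have hkn : (1:ℝ) ≤ (k.toNat:ℝ) := by exact_mod_cast (by omega : 1 ≤ k.toNat)
    rw [hk', inv_le_iff_one_le_mul₀ (by positivity), div_mul_eq_mul_div,
      le_div_iff₀ (by linarith), one_mul]
    calc (k.toNat : ℝ) ≤ (2^(M+1) : ℕ) := by exact_mod_cast h1.le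
      _ = 2 * 2^M := by push_cast; ring

lemma exSeq_norm_le_block {N : ℕ} {k : ℤ} (hk : (2:ℤ)^N ≤ k) :
    ‖exSeq k‖ ≤ ((2:ℝ)^N)⁻¹ := by
  rcases exSeq_cases k with h | h <;> rw [h]
  · simp
  · set M := Nat.log 2 k.toNat with hM
    rw [norm_inv_pow]
    have hNM : N ≤ M := by
      have h2 : (2:ℤ)^N = ((2^N : ℕ) : ℤ) := by push_cast; ring
      have hp : 0 < 2^N := Nat.pow_pos (by norm_num)
      have : 2^N ≤ k.toNat := by omega
      exact (Nat.le_log_iff_pow_le (by norm_num) (by omega)).mpr this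
    exact inv_anti₀ (by positivity) (pow_le_pow_right₀ (by norm_num) hNM)

lemma symDiff_nonneg (a : ℤ → ℂ) (m : ℤ) : 0 ≤ symDiff a m := by
  unfold symDiff; split_ifs <;> positivity

lemma exSeq_16 : exSeq 16 = 0 := by
  have h4 : Nat.sqrt 4 = 2 := by rw [show (4:ℕ) = 2^2 from rfl, Nat.sqrt_eq']
  refine exSeq_even_lo (le_refl 4) (by norm_num) (by norm_num) (by decide) ?_
  rw [h4]; norm_num

lemma symDiff_small {m : ℤ} (h : m ≤ 15) : symDiff exSeq m = 0 := by
  unfold symDiff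
  split_ifs with h1 h2
  · rcases eq_or_lt_of_le h with rfl | hlt
    · rw [exSeq_zero (by norm_num), show (15:ℤ)+1 = 16 from rfl, exSeq_16]; simp
    · rw [exSeq_zero h, exSeq_zero (by omega)]; simp
  · rw [exSeq_zero h, exSeq_zero (by omega)]; simp
  · rw [exSeq_zero (by norm_num), exSeq_zero (by norm_num), exSeq_zero (by norm_num)]; simp

lemma theta_small {n : ℕ} (h : n ≤ 4) : Theta exSeq n = 0 := by
  unfold Theta
  apply Finset.sum_eq_zero
  intro m hm
  rw [Finset.mem_filter, Finset.mem_Icc] at hm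
  have : (2:ℤ)^n ≤ 2^4 := pow_le_pow_right₀ (by norm_num) h
  exact symDiff_small (by omega)

lemma exSeq_hi {N : ℕ} (hN : 4 ≤ N) {k : ℤ}
    (h1 : (2:ℤ)^N + (Nat.sqrt N : ℤ) ≤ k) (h2 : k < (2:ℤ)^(N+1)) :
    exSeq k = ((2 : ℂ) ^ N)⁻¹ := by
  have h1' : (2:ℤ)^N ≤ k := le_trans (le_add_of_nonneg_right (by positivity)) h1
  by_cases ho : Odd k
  · exact exSeq_odd hN h1' h2 ho
  · exact exSeq_even_hi hN h1' h2 ho (by omega)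

lemma theta_bound {N : ℕ} (hN : 4 ≤ N) :
    Theta exSeq (N+1) ≤ ((Nat.sqrt N : ℝ) + 1) * (2 * ((2:ℝ)^N)⁻¹) := by
  classical
  set s : ℤ := (Nat.sqrt N : ℤ) with hs
  set A := (Finset.Icc (-(2 ^ (N+1) : ℤ) + 1) ((2 ^ (N+1) : ℤ) - 1)).filter
      (fun m => dyadLo (N+1) ≤ |m|) with hA
  set S : Finset ℤ := Finset.Icc ((2:ℤ)^N) (2^N + s - 1) ∪ {(2:ℤ)^(N+1) - 1} with hS
  have hpow : (2:ℤ)^(N+1) = 2 * 2^N := by ring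
  have hpos : (1:ℤ) ≤ 2^N := one_le_pow₀ (by norm_num)
  have hsbig : 2 ≤ s := by
    have : 2 ≤ Nat.sqrt N := by
      have := Nat.sqrt_le_sqrt hN
      rw [show Nat.sqrt 4 = 2 by rw [show (4:ℕ) = 2^2 from rfl, Nat.sqrt_eq']] at this
      exact this
    omega
  have hsle : s ≤ 2^N := by
    have : Nat.sqrt N ≤ N := Nat.sqrt_le_self N
    have hN2 : (N:ℤ) ≤ 2^N := by exact_mod_cast Nat.le_of_lt ((Nat.lt_two_pow_self (n := N)))
    have : (Nat.sqrt N : ℤ) ≤ (N:ℤ) := by exact_mod_cast this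
    omega
  have hdyad : dyadLo (N+1) = (2:ℤ)^N := by simp [dyadLo]
  -- vanishing outside S
  have hvan : ∀ m ∈ A, m ∉ A ∩ S → symDiff exSeq m = 0 := by
    intro m hmA hm
    have hmS : m ∉ S := fun h => hm (Finset.mem_inter.2 ⟨hmA, h⟩)
    rw [hA, Finset.mem_filter, Finset.mem_Icc, hdyad] at hmA
    obtain ⟨⟨hlo, hhi⟩, habs⟩ := hmA
    rcases le_or_gt m 0 with hm0 | hm0
    · have : m ≤ 15 := by omega
      exact symDiff_small this
    · have habs' : (2:ℤ)^N ≤ m := by rwa [abs_of_pos hm0] at habs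
      rw [hS, Finset.mem_union, Finset.mem_Icc, Finset.mem_singleton] at hmS
      push_neg at hmS
      obtain ⟨hnotIcc, hne⟩ := hmS
      have hge : (2:ℤ)^N + s ≤ m := by
        rcases hnotIcc (by omega) with h
        omega
      have hle2 : m ≤ 2^(N+1) - 2 := by omega
      have e1 : exSeq m = ((2:ℂ)^N)⁻¹ := exSeq_hi hN hge (by omega)
      have e2 : exSeq (m+1) = ((2:ℂ)^N)⁻¹ := exSeq_hi hN (by omega) (by omega)
      simp [symDiff, hm0, e1, e2]
  have hTheta : Theta exSeq (N+1) = ∑ m ∈ A ∩ S, symDiff exSeq m :=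
    (Finset.sum_subset (Finset.inter_subset_left) hvan).symm
  rw [hTheta]
  -- each term bounded
  have hbnd : ∀ m ∈ A ∩ S, symDiff exSeq m ≤ 2 * ((2:ℝ)^N)⁻¹ := by
    intro m hm
    have hmS : m ∈ S := Finset.mem_inter.1 hm |>.2
    rw [hS, Finset.mem_union, Finset.mem_Icc, Finset.mem_singleton] at hmS
    have hge : (2:ℤ)^N ≤ m := by rcases hmS with ⟨h, _⟩ | rfl <;> omega
    have hm0 : 0 < m := by omega
    have : symDiff exSeq m = ‖exSeq m - exSeq (m+1)‖ := by simp [symDiff, hm0]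
    rw [this]
    calc ‖exSeq m - exSeq (m+1)‖ ≤ ‖exSeq m‖ + ‖exSeq (m+1)‖ := norm_sub_le _ _
      _ ≤ ((2:ℝ)^N)⁻¹ + ((2:ℝ)^N)⁻¹ :=
        add_le_add (exSeq_norm_le_block hge) (exSeq_norm_le_block (by omega))
      _ = 2 * ((2:ℝ)^N)⁻¹ := by ring
  calc ∑ m ∈ A ∩ S, symDiff exSeq m ≤ (A ∩ S).card • (2 * ((2:ℝ)^N)⁻¹) :=
        Finset.sum_le_card_nsmul _ _ _ hbnd
    _ = ((A ∩ S).card : ℝ) * (2 * ((2:ℝ)^N)⁻¹) := by rw [nsmul_eq_mul]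
    _ ≤ ((Nat.sqrt N : ℝ) + 1) * (2 * ((2:ℝ)^N)⁻¹) := by
        apply mul_le_mul_of_nonneg_right _ (by positivity)
        have hcard : (A ∩ S).card ≤ S.card := Finset.card_le_card (Finset.inter_subset_right)
        have hScard : S.card ≤ Nat.sqrt N + 1 := by
          refine le_trans (Finset.card_union_le _ _) ?_
          have : (Finset.Icc ((2:ℤ)^N) (2^N + s - 1)).card = Nat.sqrt N := by
            rw [Int.card_Icc]
            simp [hs]
          simp [this]
        have : ((A ∩ S).card : ℝ) ≤ ((Nat.sqrt N : ℕ) + 1 : ℕ) := by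
          exact_mod_cast le_trans hcard hScard
        push_cast at this ⊢
        linarith

lemma block_sum {N : ℕ} (hN : 4 ≤ N) :
    (1:ℝ)/2 ≤ ∑ j ∈ Finset.Icc ((2:ℤ)^N) ((2:ℤ)^(N+1) - 1), (exSeq j).re := by
  classical
  set T : Finset ℤ := (Finset.range (2^(N-1))).image (fun i : ℕ => (2:ℤ)^N + 2*i + 1) with hT
  have hpow : (2:ℤ)^N = 2 * 2^(N-1) := by
    rw [← pow_succ']; congr 1; omega
  have hsub : T ⊆ Finset.Icc ((2:ℤ)^N) ((2:ℤ)^(N+1) - 1) := by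
    intro x hx
    rw [hT, Finset.mem_image] at hx
    obtain ⟨i, hi, rfl⟩ := hx
    rw [Finset.mem_range] at hi
    have hi' : (i:ℤ) < ((2:ℕ)^(N-1) : ℕ) := by exact_mod_cast hi
    push_cast at hi'
    rw [Finset.mem_Icc]
    constructor
    · have : (0:ℤ) ≤ i := Int.natCast_nonneg i
      omega
    · have : (2:ℤ)^(N+1) = 2 * (2 * 2^(N-1)) := by rw [← hpow]; ring
      omega
  have hodd : ∀ i : ℕ, Odd ((2:ℤ)^N + 2*i + 1) := by
    intro i
    rw [hpow]
    exact ⟨2^(N-1) + i, by ring⟩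
  have hval : ∀ i ∈ Finset.range (2^(N-1)),
      (exSeq ((2:ℤ)^N + 2*i + 1)).re = ((2:ℝ)^N)⁻¹ := by
    intro i hi
    rw [Finset.mem_range] at hi
    have hi' : (i:ℤ) < ((2:ℕ)^(N-1) : ℕ) := by exact_mod_cast hi
    push_cast at hi'
    have h1 : (2:ℤ)^N ≤ (2:ℤ)^N + 2*i + 1 := by
      have : (0:ℤ) ≤ i := Int.natCast_nonneg i
      omega
    have h2 : (2:ℤ)^N + 2*i + 1 < (2:ℤ)^(N+1) := by
      have : (2:ℤ)^(N+1) = 2 * (2 * 2^(N-1)) := by rw [← hpow]; ring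
      omega
    rw [exSeq_odd hN h1 h2 (hodd i), inv_pow_val, Complex.ofReal_re]
  have hinj : Set.InjOn (fun i : ℕ => (2:ℤ)^N + 2*i + 1) (Finset.range (2^(N-1))) := by
    intro a _ b _ hab
    simp only at hab
    omega
  have hTsum : ∑ j ∈ T, (exSeq j).re = (1:ℝ)/2 := by
    rw [hT, Finset.sum_image hinj]
    rw [Finset.sum_congr rfl hval, Finset.sum_const, Finset.card_range, nsmul_eq_mul]
    have h2r : (2:ℝ)^N = 2^(N-1) * 2 := by
      rw [← pow_succ]; congr 1; omega
    push_cast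
    rw [h2r]
    have : ((2:ℝ)^(N-1)) ≠ 0 := by positivity
    field_simp
  calc (1:ℝ)/2 = ∑ j ∈ T, (exSeq j).re := hTsum.symm
    _ ≤ _ := Finset.sum_le_sum_of_subset_of_nonneg hsub
        (fun j _ _ => exSeq_re_nonneg j)

lemma cum_sum_lower : ∀ n : ℕ, 4 ≤ n →
    ((n:ℝ) - 3)/2 ≤ ∑ j ∈ Finset.Icc (0:ℤ) ((2:ℤ)^(n+1) - 1), (exSeq j).re := by
  intro n hn
  induction n with
  | zero => omega
  | succ m ih =>
    have hsplit : Finset.Icc (0:ℤ) ((2:ℤ)^(m+2) - 1) =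
        Finset.Icc (0:ℤ) ((2:ℤ)^(m+1) - 1) ∪ Finset.Icc ((2:ℤ)^(m+1)) ((2:ℤ)^(m+2) - 1) := by
      have h1 : (1:ℤ) ≤ 2^(m+1) := one_le_pow₀ (by norm_num)
      have h2 : (2:ℤ)^(m+2) = 2 * 2^(m+1) := by ring
      ext x; simp only [Finset.mem_Icc, Finset.mem_union]; omega
    have hdisj : Disjoint (Finset.Icc (0:ℤ) ((2:ℤ)^(m+1) - 1))
        (Finset.Icc ((2:ℤ)^(m+1)) ((2:ℤ)^(m+2) - 1)) := by
      rw [Finset.disjoint_left]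
      intro x hx hx'
      rw [Finset.mem_Icc] at hx hx'
      omega
    have hb := block_sum (show 4 ≤ m+1 by omega)
    have e2 : m+1+1 = m+2 := by omega
    rw [e2] at hb
    rw [show m + 1 + 1 = m + 2 from rfl, hsplit, Finset.sum_union hdisj]
    rcases Nat.lt_or_ge m 4 with hm | hm
    · have h0 : (0:ℝ) ≤ ∑ j ∈ Finset.Icc (0:ℤ) ((2:ℤ)^(m+1) - 1), (exSeq j).re :=
        Finset.sum_nonneg fun j _ => exSeq_re_nonneg j
      have hm3 : m = 3 := by omega
      subst hm3
      norm_num at hb h0 ⊢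
      linarith
    · have hIH := ih hm
      push_cast at hIH ⊢
      linarith

lemma psum_lower {n : ℕ} (hn : 4 ≤ n) :
    ((n:ℝ) - 3)/2 ≤ ‖psum exSeq ((2:ℤ)^(n+1) - 1)‖ := by
  have hm : (0:ℤ) ≤ 2^(n+1) - 1 := by
    have : (1:ℤ) ≤ 2^(n+1) := one_le_pow₀ (by norm_num)
    omega
  rw [psum, min_eq_right hm, max_eq_left hm]
  calc ((n:ℝ) - 3)/2 ≤ ∑ j ∈ Finset.Icc (0:ℤ) ((2:ℤ)^(n+1) - 1), (exSeq j).re :=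
        cum_sum_lower n hn
    _ = (∑ j ∈ Finset.Icc (0:ℤ) ((2:ℤ)^(n+1) - 1), exSeq j).re :=
        (Complex.re_sum _ _).symm
    _ ≤ ‖∑ j ∈ Finset.Icc (0:ℤ) ((2:ℤ)^(n+1) - 1), exSeq j‖ := Complex.re_le_norm _

lemma gmbar_holds : GMBarWith 64 exSeq := by
  intro n
  rcases le_or_gt n 4 with h4 | h4
  · rw [theta_small h4]; simp
  · obtain ⟨N, rfl⟩ : ∃ N, n = N + 1 := ⟨n - 1, by omega⟩
    have hN : 4 ≤ N := by omega
    set n := N + 1 with hn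
    set m₀ : ℤ := (2:ℤ)^(n+1) - 1 with hm₀
    have hpos : (1:ℤ) ≤ 2^n := one_le_pow₀ (by norm_num)
    have hpos1 : (1:ℤ) ≤ 2^(n+1) := one_le_pow₀ (by norm_num)
    have hm₀pos : 0 < m₀ := by
      have : (2:ℤ)^(n+1) = 2 * 2^n := by ring
      omega
    have habs : |m₀| = m₀ := abs_of_pos hm₀pos
    have hcond : (2 ^ n : ℤ) ≤ |m₀| ∧ |m₀| < 2 ^ (n + 1) := by
      rw [habs]
      constructor
      · have : (2:ℤ)^(n+1) = 2 * 2^n := by ring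
        omega
      · omega
    set x : ℝ := ‖psum exSeq m₀‖ / ((m₀.natAbs : ℝ) + 1) with hx
    -- the real inequality
    have hreal : Theta exSeq n ≤ 64 * x := by
      have hP : (0:ℝ) < (2:ℝ)^N := by positivity
      have hden : ((m₀.natAbs : ℝ) + 1) = (2:ℝ)^(n+1) := by
        have h2 : ((m₀.natAbs : ℕ) : ℝ) = ((m₀ : ℤ) : ℝ) := by
          rw [Nat.cast_natAbs, habs]
        rw [h2, hm₀]
        push_cast
        ring
      have hsN : (Nat.sqrt N : ℝ) ≤ (N:ℝ) := by exact_mod_cast Nat.sqrt_le_self N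
      have hNr : (4:ℝ) ≤ (N:ℝ) := by exact_mod_cast hN
      have h2n1 : (2:ℝ)^(n+1) = 4 * 2^N := by rw [hn]; ring
      have hx_lb : ((n:ℝ) - 3)/2 / (4 * 2^N) ≤ x := by
        rw [hx, hden, h2n1]
        have hnum := psum_lower (show 4 ≤ n by omega)
        have hc : (0:ℝ) < 4 * 2^N := by positivity
        exact div_le_div_of_nonneg_right hnum hc.le |>.trans_eq rfl
      have hth := theta_bound hN
      have hkey : ((Nat.sqrt N : ℝ) + 1) * (2 * ((2:ℝ)^N)⁻¹) ≤
          64 * (((n:ℝ) - 3)/2 / (4 * 2^N)) := by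
        have hnr : (n:ℝ) = (N:ℝ) + 1 := by rw [hn]; push_cast; ring
        rw [hnr]
        have e : 64 * ((((N:ℝ) + 1) - 3)/2 / (4 * 2^N)) = (8*((N:ℝ) - 2)) * ((2:ℝ)^N)⁻¹ := by
          field_simp
          ring
        have e2 : ((Nat.sqrt N : ℝ) + 1) * (2 * ((2:ℝ)^N)⁻¹)
            = (2*((Nat.sqrt N:ℝ)+1)) * ((2:ℝ)^N)⁻¹ := by ring
        rw [e, e2]
        apply mul_le_mul_of_nonneg_right _ (by positivity)
        linarith
      calc Theta exSeq n ≤ ((Nat.sqrt N : ℝ) + 1) * (2 * ((2:ℝ)^N)⁻¹) := hth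
        _ ≤ 64 * (((n:ℝ) - 3)/2 / (4 * 2^N)) := hkey
        _ ≤ 64 * x := by linarith
    -- pass to ENNReal
    have hAvg : ENNReal.ofReal x ≤ hatAvg exSeq n := by
      rw [hatAvg]
      exact le_iSup_of_le m₀ (le_iSup_of_le hcond le_rfl)
    have hterm : hatAvg exSeq n ≤
        ⨆ k : ℕ, min 1 ((2 : ℝ≥0∞) ^ ((k : ℝ) - ((n:ℕ) : ℝ))) * hatAvg exSeq k := by
      have : min 1 ((2 : ℝ≥0∞) ^ (((n:ℕ) : ℝ) - ((n:ℕ) : ℝ))) * hatAvg exSeq n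
          = hatAvg exSeq n := by
        rw [sub_self, ENNReal.rpow_zero, min_self, one_mul]
      rw [← this]
      exact le_iSup (fun k : ℕ => min 1 ((2 : ℝ≥0∞) ^ ((k : ℝ) - ((n:ℕ) : ℝ))) * hatAvg exSeq k) n
    calc ENNReal.ofReal (Theta exSeq n) ≤ ENNReal.ofReal (64 * x) :=
          ENNReal.ofReal_le_ofReal hreal
      _ = ENNReal.ofReal 64 * ENNReal.ofReal x := ENNReal.ofReal_mul (by norm_num)
      _ ≤ ENNReal.ofReal 64 * hatAvg exSeq n := mul_le_mul_right hAvg _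
      _ ≤ _ := mul_le_mul_right hterm _

lemma sqrt_le_pow {N : ℕ} : (Nat.sqrt N : ℤ) ≤ 2^N := by
  have h1 : Nat.sqrt N ≤ N := Nat.sqrt_le_self N
  have h2 : N < 2^N := (Nat.lt_two_pow_self (n := N))
  have : Nat.sqrt N < 2^N := lt_of_le_of_lt h1 h2
  exact_mod_cast this.le

lemma sqrt_ge_two {N : ℕ} (hN : 4 ≤ N) : 2 ≤ Nat.sqrt N := by
  have := Nat.sqrt_le_sqrt hN
  rwa [show Nat.sqrt 4 = 2 by rw [show (4:ℕ) = 2^2 from rfl, Nat.sqrt_eq']] at this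

lemma diff_eq {N : ℕ} (hN : 4 ≤ N) {k : ℤ}
    (h1 : (2:ℤ)^N ≤ k) (h2 : k ≤ 2^N + (Nat.sqrt N:ℤ) - 2) :
    ‖exSeq k - exSeq (k+1)‖ = ((2:ℝ)^N)⁻¹ := by
  have hsle : (Nat.sqrt N : ℤ) ≤ 2^N := sqrt_le_pow
  have hpN : (2:ℤ)^(N+1) = 2*2^N := by ring
  have hk2 : k < 2^(N+1) := by omega
  have hk12 : k + 1 < 2^(N+1) := by omega
  rcases Int.even_or_odd k with he | ho
  · have hek : ¬ Odd k := (Int.not_odd_iff_even).mpr he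
    have e1 : exSeq k = 0 := exSeq_even_lo hN h1 hk2 hek (by omega)
    have e2 : exSeq (k+1) = ((2:ℂ)^N)⁻¹ := exSeq_odd hN (by omega) hk12 he.add_one
    rw [e1, e2, zero_sub, norm_neg, norm_inv_pow]
  · have e1 : exSeq k = ((2:ℂ)^N)⁻¹ := exSeq_odd hN h1 hk2 ho
    have hek1 : ¬ Odd (k+1) := Int.not_odd_iff_even.mpr ho.add_one
    have e2 : exSeq (k+1) = 0 := exSeq_even_lo hN (by omega) hk12 hek1 (by omega)
    rw [e1, e2, sub_zero, norm_inv_pow]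

lemma lhs_lower {N : ℕ} (hN : 4 ≤ N) :
    ((Nat.sqrt N : ℝ) - 1) * ((2:ℝ)^N)⁻¹ ≤
      ∑ k ∈ Finset.Icc (((2^N : ℕ) : ℤ)) (2 * ((2^N : ℕ) : ℤ)),
        ‖exSeq k - exSeq (k+1)‖ := by
  have hcast : ((2^N : ℕ) : ℤ) = (2:ℤ)^N := by push_cast; ring
  have hs2 : (2:ℤ) ≤ (Nat.sqrt N : ℤ) := by exact_mod_cast sqrt_ge_two hN
  have hsle : (Nat.sqrt N : ℤ) ≤ 2^N := sqrt_le_pow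
  set s := (Nat.sqrt N : ℤ) with hs
  have hsub : Finset.Icc ((2:ℤ)^N) (2^N + s - 2) ⊆
      Finset.Icc (((2^N : ℕ) : ℤ)) (2 * ((2^N : ℕ) : ℤ)) := by
    intro x hx
    rw [Finset.mem_Icc] at hx ⊢
    rw [hcast]
    omega
  have hsum : ∑ k ∈ Finset.Icc ((2:ℤ)^N) (2^N + s - 2), ‖exSeq k - exSeq (k+1)‖
      = ((Nat.sqrt N : ℝ) - 1) * ((2:ℝ)^N)⁻¹ := by
    have e : ∑ k ∈ Finset.Icc ((2:ℤ)^N) (2^N + s - 2), ‖exSeq k - exSeq (k+1)‖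
        = ∑ _k ∈ Finset.Icc ((2:ℤ)^N) (2^N + s - 2), ((2:ℝ)^N)⁻¹ :=
      Finset.sum_congr rfl (fun k hk => by
        rw [Finset.mem_Icc] at hk
        exact diff_eq hN hk.1 hk.2)
    rw [e, Finset.sum_const, Int.card_Icc, nsmul_eq_mul]
    congr 1
    have h1 : (2^N + s - 2 + 1 - 2^N) = s - 1 := by ring
    rw [h1]
    have h2 : ((s-1).toNat : ℤ) = s - 1 := Int.toNat_of_nonneg (by omega)
    have : (((s-1).toNat : ℤ) : ℝ) = ((s : ℤ) : ℝ) - 1 := by rw [h2]; push_cast; ring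
    rw [hs] at this
    push_cast at this ⊢
    linarith
  rw [← hsum]
  exact Finset.sum_le_sum_of_subset_of_nonneg hsub (fun j _ _ => norm_nonneg _)

lemma rhs_upper {lam : ℝ} (hlam : 1 < lam) {n : ℕ} (hn : 1 ≤ n) :
    ∑ k ∈ Finset.Icc ⌈(n:ℝ)/lam⌉ ⌊lam*(n:ℝ)⌋, ‖exSeq k‖ ≤ 2*lam^2 := by
  have hnpos : (0:ℝ) < n := by exact_mod_cast hn
  have hlam0 : (0:ℝ) < lam := by linarith
  have hq : (0:ℝ) < (n:ℝ)/lam := by positivity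
  have ha1 : 1 ≤ ⌈(n:ℝ)/lam⌉ := Int.ceil_pos.mpr hq
  have hfl0 : (1:ℤ) ≤ ⌊lam*(n:ℝ)⌋ := by
    have hn1 : (1:ℝ) ≤ (n:ℝ) := by exact_mod_cast hn
    have : (1:ℝ) ≤ lam*(n:ℝ) := by nlinarith
    exact_mod_cast Int.le_floor.mpr (by exact_mod_cast this)
  have hbound : ∀ k ∈ Finset.Icc ⌈(n:ℝ)/lam⌉ ⌊lam*(n:ℝ)⌋, ‖exSeq k‖ ≤ 2*lam/n := by
    intro k hk
    rw [Finset.mem_Icc] at hk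
    have hk1 : (1:ℤ) ≤ k := le_trans ha1 hk.1
    have hkreal : (n:ℝ)/lam ≤ (k:ℝ) := by
      refine le_trans (Int.le_ceil _) ?_
      exact_mod_cast hk.1
    calc ‖exSeq k‖ ≤ 2/(k:ℝ) := exSeq_norm_le_two_div hk1
      _ ≤ 2/((n:ℝ)/lam) := by
          apply div_le_div_of_nonneg_left (by norm_num) hq hkreal
      _ = 2*lam/n := by field_simp
  calc ∑ k ∈ Finset.Icc ⌈(n:ℝ)/lam⌉ ⌊lam*(n:ℝ)⌋, ‖exSeq k‖
      ≤ (Finset.Icc ⌈(n:ℝ)/lam⌉ ⌊lam*(n:ℝ)⌋).card • (2*lam/n) :=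
        Finset.sum_le_card_nsmul _ _ _ hbound
    _ = ((Finset.Icc ⌈(n:ℝ)/lam⌉ ⌊lam*(n:ℝ)⌋).card : ℝ) * (2*lam/n) := by
        rw [nsmul_eq_mul]
    _ ≤ (lam*n) * (2*lam/n) := by
        apply mul_le_mul_of_nonneg_right _ (by positivity)
        have hcardZ : (((Finset.Icc ⌈(n:ℝ)/lam⌉ ⌊lam*(n:ℝ)⌋).card : ℤ)) ≤ ⌊lam*(n:ℝ)⌋ := by
          rw [Int.card_Icc]
          omega
        have h2 : ((⌊lam*(n:ℝ)⌋ : ℤ) : ℝ) ≤ lam*n := Int.floor_le _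
        calc (((Finset.Icc ⌈(n:ℝ)/lam⌉ ⌊lam*(n:ℝ)⌋).card : ℕ) : ℝ)
            ≤ ((⌊lam*(n:ℝ)⌋ : ℤ) : ℝ) := by exact_mod_cast hcardZ
          _ ≤ lam*n := h2
    _ = 2*lam^2 := by field_simp

lemma not_gmseq : ¬ GMseq exSeq := by
  rintro ⟨C, hC, lam, hlam, h⟩
  set M := max (Nat.ceil (2*C*lam^2)) 15 with hM
  set N := (M+2)^2 with hNdef
  have hsqrt : Nat.sqrt N = M + 2 := Nat.sqrt_eq' (M+2)
  have hN4 : 4 ≤ N := by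
    have h15 : 15 ≤ M := le_max_right _ _
    have h2 : M + 2 ≤ (M+2)^2 := Nat.le_self_pow (by norm_num) _
    omega
  set n := 2^N with hn
  have hn1 : 1 ≤ n := Nat.one_le_two_pow
  have hmain := h n hn1
  have hlhs := lhs_lower hN4
  have hrhs := rhs_upper hlam hn1
  have hncast : ((n:ℕ):ℝ) = (2:ℝ)^N := by rw [hn]; push_cast; ring
  have hP : (0:ℝ) < (2:ℝ)^N := by positivity
  have hCn : 0 ≤ C / (n:ℝ) := by positivity
  have chain : ((Nat.sqrt N : ℝ) - 1) * ((2:ℝ)^N)⁻¹ ≤ (2*C*lam^2) * ((2:ℝ)^N)⁻¹ := by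
    calc ((Nat.sqrt N : ℝ) - 1) * ((2:ℝ)^N)⁻¹
        ≤ ∑ k ∈ Finset.Icc ((n:ℕ) : ℤ) (2 * ((n:ℕ):ℤ)), ‖exSeq k - exSeq (k+1)‖ := by
          rw [hn]; exact hlhs
      _ ≤ (C / (n:ℝ)) * ∑ k ∈ Finset.Icc ⌈((n:ℕ):ℝ)/lam⌉ ⌊lam*((n:ℕ):ℝ)⌋, ‖exSeq k‖ :=
          hmain
      _ ≤ (C / (n:ℝ)) * (2*lam^2) := mul_le_mul_of_nonneg_left hrhs hCn
      _ = (2*C*lam^2) * ((2:ℝ)^N)⁻¹ := by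
          rw [div_mul_eq_mul_div, hncast]
          field_simp
  have hfin : ((Nat.sqrt N : ℝ) - 1) ≤ 2*C*lam^2 :=
    le_of_mul_le_mul_right (by simpa [mul_comm] using chain) (inv_pos.mpr hP)
  have hceil : (2*C*lam^2 : ℝ) ≤ (Nat.ceil (2*C*lam^2) : ℝ) := Nat.le_ceil _
  have hMge : (Nat.ceil (2*C*lam^2) : ℝ) ≤ (M:ℝ) := by
    exact_mod_cast le_max_left _ _
  rw [hsqrt] at hfin
  push_cast at hfin
  linarith

/-- There is a sequence vanishing for `k ≤ 0` that belongs to `GM-bar` but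
whose restriction to `k ≥ 1` does not belong to `GM`:
`GM-bar \ GM ≠ ∅`. -/
theorem GMbar_not_subset_GM : GMBar exSeq ∧ ¬ GMseq exSeq :=
  ⟨⟨64, by norm_num, gmbar_holds⟩, not_gmseq⟩
end

section
/- Define a_k = (−1)^k 2^{−(7/4)n} for 2^n ≤ k < 2^{n+1} (n ≥ 0), b_k = (2/3)^n for 2^n ≤ k < 2^{n+1} (n ≥ 0), and c_k = a_k + i b_k for k > 0, c_k = 0 for k ≤ 0. Then: (i) {a_k}_{k≥1} ∉ GM; (ii) {b_k}_{k≥1} is nonincreasing (hence in GM); (iii) {c_k}_{k∈ℤ} ∈ GM-bar. -/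
open scoped ENNReal BigOperators

/-- `a_k = (-1)^k 2^{-(7/4)n}` for `2^n ≤ k < 2^{n+1}`, `n ≥ 0` (and `0` for `k ≤ 0`). -/
noncomputable def aRe : ℤ → ℝ := fun k =>
  if k ≤ 0 then 0
  else (-1 : ℝ) ^ k * ((2 : ℝ) ^ ((7 / 4 : ℝ) * (Nat.log 2 k.toNat : ℝ)))⁻¹

/-- `b_k = (2/3)^n` for `2^n ≤ k < 2^{n+1}`, `n ≥ 0` (and `0` for `k ≤ 0`). -/
noncomputable def bRe : ℤ → ℝ := fun k =>
  if k ≤ 0 then 0 else (2 / 3 : ℝ) ^ (Nat.log 2 k.toNat)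

/-- `c_k = a_k + i b_k` for `k > 0`, `c_k = 0` for `k ≤ 0`. -/
noncomputable def cSeq : ℤ → ℂ := fun k =>
  if k ≤ 0 then 0 else (aRe k : ℂ) + (bRe k : ℂ) * Complex.I

lemma abs_aRe (k : ℤ) (hk : 1 ≤ k) :
    |aRe k| = ((2 : ℝ) ^ ((7 / 4 : ℝ) * (Nat.log 2 k.toNat : ℝ)))⁻¹ := by
  rw [aRe, if_neg (by omega)]
  rw [abs_mul, abs_inv, abs_of_pos (Real.rpow_pos_of_pos (by norm_num) _)]
  have : |(-1 : ℝ) ^ k| = 1 := by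
    rcases Int.even_or_odd k with h | h
    · rw [h.neg_one_zpow]; simp
    · rw [Odd.neg_one_zpow h]; simp
  rw [this, one_mul]

lemma abs_aRe_le {n : ℕ} {k : ℤ} (hk : (2:ℤ)^n ≤ k) :
    |aRe k| ≤ ((2 : ℝ) ^ ((7 / 4 : ℝ) * (n : ℝ)))⁻¹ := by
  have h2n : (0:ℤ) < 2^n := by positivity
  have hk1 : 1 ≤ k := le_trans h2n hk
  rw [abs_aRe k hk1]
  have hlog : n ≤ Nat.log 2 k.toNat := by
    rw [Nat.le_log_iff_pow_le one_lt_two (by omega)]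
    have : (2:ℤ)^n = ((2^n : ℕ) : ℤ) := by push_cast; ring
    omega
  rw [inv_le_inv₀ (by positivity) (by positivity)]
  apply Real.rpow_le_rpow_of_exponent_le (by norm_num)
  have : (n:ℝ) ≤ (Nat.log 2 k.toNat : ℝ) := by exact_mod_cast hlog
  nlinarith

lemma bRe_nonneg (k : ℤ) : 0 ≤ bRe k := by
  rw [bRe]; split <;> positivity

lemma bRe_eq {n : ℕ} {k : ℤ} (h1 : (2:ℤ)^n ≤ k) (h2 : k < (2:ℤ)^(n+1)) :
    bRe k = (2/3 : ℝ)^n := by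
  have h2n : (0:ℤ) < 2^n := by positivity
  have hc : ∀ m : ℕ, (2:ℤ)^m = ((2^m : ℕ) : ℤ) := by intro m; push_cast; ring
  rw [bRe, if_neg (by omega)]
  congr 1
  have hl : n ≤ Nat.log 2 k.toNat := by
    rw [Nat.le_log_iff_pow_le one_lt_two (by omega)]
    have := hc n; omega
  have hu : Nat.log 2 k.toNat < n + 1 := by
    rw [Nat.log_lt_iff_lt_pow one_lt_two (by omega)]
    have := hc (n+1); omega
  omega

lemma base_rpow : (2:ℝ) ^ (-(3/4) : ℝ) ≤ 2/3 := by
  have h4 : ((2:ℝ) ^ (-(3/4):ℝ)) ^ (4:ℕ) = 1/8 := by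
    rw [← Real.rpow_natCast ((2:ℝ) ^ (-(3/4):ℝ)) 4, ← Real.rpow_mul (by norm_num)]
    norm_num
  by_contra h
  push_neg at h
  have := pow_lt_pow_left₀ h (by norm_num : (0:ℝ) ≤ 2/3) (by norm_num : (4:ℕ) ≠ 0)
  rw [h4] at this
  norm_num at this

lemma pow_mul_inv_le (m : ℕ) :
    (2:ℝ) ^ m * ((2 : ℝ) ^ ((7/4 : ℝ) * (m:ℝ)))⁻¹ ≤ (2/3 : ℝ) ^ m := by
  have h1 : (2:ℝ) ^ m * ((2 : ℝ) ^ ((7/4 : ℝ) * (m:ℝ)))⁻¹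
      = ((2:ℝ) ^ (-(3/4):ℝ)) ^ m := by
    rw [← Real.rpow_natCast (2:ℝ) m, ← Real.rpow_neg (by norm_num),
      ← Real.rpow_add (by norm_num), ← Real.rpow_natCast ((2:ℝ)^(-(3/4):ℝ)) m,
      ← Real.rpow_mul (by norm_num)]
    ring_nf
  rw [h1]
  exact pow_le_pow_left₀ (Real.rpow_pos_of_pos (by norm_num) _).le base_rpow m

lemma cSeq_pos {k : ℤ} (hk : 0 < k) :
    cSeq k = (aRe k : ℂ) + (bRe k : ℂ) * Complex.I := by
  rw [cSeq, if_neg (by omega)]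

lemma cSeq_nonpos {k : ℤ} (hk : k ≤ 0) : cSeq k = 0 := by
  rw [cSeq, if_pos hk]

lemma theta_zero : Theta cSeq 0 ≤ (9/2 : ℝ) * (2/3 : ℝ) ^ 0 := by
  have hT : Theta cSeq 0 = symDiff cSeq 0 := by
    rw [Theta]; norm_num [dyadLo]
  have h1 : ‖cSeq 0 - cSeq 1‖ ≤ 2 := by
    rw [cSeq_nonpos le_rfl, zero_sub, norm_neg, cSeq_pos one_pos]
    refine (norm_add_le _ _).trans ?_
    rw [Complex.norm_real, norm_mul, Complex.norm_real, Complex.norm_I, mul_one]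
    have ha : |aRe 1| = 1 := by
      rw [abs_aRe 1 le_rfl]
      norm_num [Nat.log_one_right]
    have hb : |bRe 1| = 1 := by
      rw [bRe, if_neg (by norm_num)]
      norm_num [Nat.log_one_right]
    rw [Real.norm_eq_abs, Real.norm_eq_abs, ha, hb]; norm_num
  have h2 : ‖cSeq 0 - cSeq (-1)‖ = 0 := by
    rw [cSeq_nonpos le_rfl, cSeq_nonpos (by norm_num : (-1:ℤ) ≤ 0)]; simp
  rw [hT, symDiff, if_neg (by norm_num), if_neg (by norm_num), h2, add_zero]
  exact h1.trans (by norm_num)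

lemma theta_bound_s16 (n : ℕ) : Theta cSeq n ≤ (9/2 : ℝ) * (2/3 : ℝ) ^ n := by
  rcases Nat.eq_zero_or_pos n with rfl | hn
  · exact theta_zero
  obtain ⟨p, rfl⟩ : ∃ p, n = p + 1 := ⟨n - 1, by omega⟩
  have hp2 : (0:ℤ) < 2 ^ p := by positivity
  have h2n : ((2:ℤ) ^ (p+1)) = 2 * 2^p := by ring
  set J : ℝ := ((2 : ℝ) ^ ((7/4 : ℝ) * (p:ℝ)))⁻¹ with hJ
  have hJpos : 0 < J := by rw [hJ]; positivity
  set h : ℤ → ℝ := fun m =>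
    if 0 < m then |aRe m - aRe (m+1)| + |bRe m - bRe (m+1)| else 0 with hh
  set S := (Finset.Icc (-(2 ^ (p+1) : ℤ) + 1) ((2 ^ (p+1) : ℤ) - 1)).filter
      (fun m => dyadLo (p+1) ≤ |m|) with hS
  set T := Finset.Icc ((2:ℤ)^p) ((2:ℤ)^(p+1) - 1) with hT
  have hdyad : dyadLo (p+1) = (2:ℤ)^p := by rw [dyadLo]; simp
  have memS : ∀ m : ℤ, m ∈ S ↔
      (-(2 ^ (p+1) : ℤ) + 1 ≤ m ∧ m ≤ (2 ^ (p+1) : ℤ) - 1) ∧ (2:ℤ)^p ≤ |m| := by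
    intro m; rw [hS, Finset.mem_filter, Finset.mem_Icc, hdyad]
  -- step A
  have stepA : Theta cSeq (p+1) ≤ ∑ m ∈ S, h m := by
    apply Finset.sum_le_sum
    intro m hm
    rw [memS] at hm
    obtain ⟨⟨hm1, hm2⟩, hm3⟩ := hm
    rcases lt_trichotomy m 0 with hneg | hzero | hpos
    · rw [symDiff, if_neg (by omega), if_pos hneg,
        cSeq_nonpos hneg.le, cSeq_nonpos (by omega), hh]
      simp [hneg.not_gt]
    · exfalso; rw [hzero] at hm3; simp at hm3; omega
    · rw [symDiff, if_pos hpos, hh]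
      simp only [if_pos hpos]
      rw [cSeq_pos hpos, cSeq_pos (by omega)]
      have : (aRe m : ℂ) + (bRe m : ℂ) * Complex.I -
          ((aRe (m+1) : ℂ) + (bRe (m+1) : ℂ) * Complex.I)
          = ((aRe m - aRe (m+1) : ℝ) : ℂ) + ((bRe m - bRe (m+1) : ℝ) : ℂ) * Complex.I := by
        push_cast; ring
      rw [this]
      refine (norm_add_le _ _).trans ?_
      rw [Complex.norm_real, norm_mul, Complex.norm_real, Complex.norm_I, mul_one,
        Real.norm_eq_abs, Real.norm_eq_abs]
  -- step B
  have stepB : ∑ m ∈ S, h m = ∑ m ∈ T, h m := by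
    symm
    apply Finset.sum_subset
    · intro m hm
      rw [hT, Finset.mem_Icc] at hm
      rw [memS]
      constructor
      · omega
      · rw [abs_of_pos (by omega)]; exact hm.1
    · intro m hmS hmT
      rw [memS] at hmS
      rw [hT, Finset.mem_Icc] at hmT
      have : m < 0 := by
        rcases abs_cases m with ⟨he, _⟩ | ⟨_, hneg⟩
        · exfalso; apply hmT; omega
        · omega
      rw [hh]; simp [this.not_gt]
  -- step C : pointwise bound on T
  have stepC : ∑ m ∈ T, h m ≤
      ∑ m ∈ T, (2 * J + (if m = (2:ℤ)^(p+1) - 1 then (2/3:ℝ)^p else 0)) := by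
    apply Finset.sum_le_sum
    intro m hm
    rw [hT, Finset.mem_Icc] at hm
    obtain ⟨hm1, hm2⟩ := hm
    have hmpos : 0 < m := by omega
    rw [hh]; simp only [if_pos hmpos]
    have hA : |aRe m - aRe (m+1)| ≤ 2 * J := by
      refine (abs_sub _ _).trans ?_
      have h1 := abs_aRe_le (n := p) hm1
      have h2 := abs_aRe_le (n := p) (by omega : (2:ℤ)^p ≤ m + 1)
      rw [hJ]; linarith
    have hB : |bRe m - bRe (m+1)| ≤
        (if m = (2:ℤ)^(p+1) - 1 then (2/3:ℝ)^p else 0) := by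
      by_cases hme : m = (2:ℤ)^(p+1) - 1
      · rw [if_pos hme]
        have hb1 : bRe m = (2/3:ℝ)^p := bRe_eq hm1 (by omega)
        have hb2 : bRe (m+1) = (2/3:ℝ)^(p+1) := by
          apply bRe_eq
          · omega
          · have : (2:ℤ)^(p+1+1) = 2 * 2^(p+1) := by ring
            omega
        rw [hb1, hb2, abs_of_nonneg]
        · nlinarith [pow_pos (by norm_num : (0:ℝ) < 2/3) (p+1)]
        · have : (2/3:ℝ)^(p+1) ≤ (2/3:ℝ)^p :=
            pow_le_pow_of_le_one (by norm_num) (by norm_num) (by omega)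
          linarith
      · rw [if_neg hme]
        have hb1 : bRe m = (2/3:ℝ)^p := bRe_eq hm1 (by omega)
        have hb2 : bRe (m+1) = (2/3:ℝ)^p := bRe_eq (by omega) (by omega)
        rw [hb1, hb2]; simp
    linarith
  -- step D : compute RHS
  have cardT : ((T.card : ℝ)) = (2:ℝ)^p := by
    rw [hT, Int.card_Icc]
    have : ((2:ℤ)^(p+1) - 1 + 1 - 2^p) = 2^p := by ring
    rw [this]
    have h5 : (2:ℤ)^p = ((2^p : ℕ) : ℤ) := by push_cast; ring
    have : ((2:ℤ)^p).toNat = 2^p := by rw [h5, Int.toNat_natCast]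
    rw [this]; push_cast; ring
  have stepD : ∑ m ∈ T, (2 * J + (if m = (2:ℤ)^(p+1) - 1 then (2/3:ℝ)^p else 0))
      = (2:ℝ)^p * (2 * J) + (2/3:ℝ)^p := by
    rw [Finset.sum_add_distrib, Finset.sum_const, nsmul_eq_mul, cardT]
    congr 1
    rw [Finset.sum_ite_eq' T ((2:ℤ)^(p+1) - 1)]
    rw [if_pos]
    rw [hT, Finset.mem_Icc]
    omega
  have hkey : (2:ℝ)^p * (2 * J) ≤ 2 * (2/3:ℝ)^p := by
    have := pow_mul_inv_le p
    rw [hJ]; nlinarith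
  calc Theta cSeq (p+1) ≤ ∑ m ∈ T, h m := by rw [← stepB]; exact stepA
    _ ≤ (2:ℝ)^p * (2 * J) + (2/3:ℝ)^p := by rw [← stepD]; exact stepC
    _ ≤ 2 * (2/3:ℝ)^p + (2/3:ℝ)^p := by linarith
    _ = (9/2 : ℝ) * (2/3 : ℝ) ^ (p+1) := by ring

lemma bRe_ge {n : ℕ} {k : ℤ} (h1 : 1 ≤ k) (h2 : k ≤ (2:ℤ)^n) :
    (2/3 : ℝ)^n ≤ bRe k := by
  rw [bRe, if_neg (by omega)]
  apply pow_le_pow_of_le_one (by norm_num) (by norm_num)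
  calc Nat.log 2 k.toNat ≤ Nat.log 2 (2^n) := by
        apply Nat.log_mono_right
        have : (2:ℤ)^n = ((2^n : ℕ) : ℤ) := by push_cast; ring
        omega
    _ = n := Nat.log_pow one_lt_two n

lemma cSeq_im (k : ℤ) : (cSeq k).im = bRe k := by
  rw [cSeq, bRe]
  split
  · simp
  · simp [← Complex.ofReal_pow]

lemma hat_lower (n : ℕ) :
    ENNReal.ofReal ((1/2 : ℝ) * (2/3 : ℝ)^n) ≤ hatAvg cSeq n := by
  have hp : (0:ℤ) < 2^n := by positivity
  have hcond : ((2:ℤ)^n ≤ |(2:ℤ)^n| ∧ |(2:ℤ)^n| < 2^(n+1)) := by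
    rw [abs_of_pos hp]
    refine ⟨le_refl _, ?_⟩
    have : (2:ℤ)^(n+1) = 2 * 2^n := by ring
    omega
  set m : ℤ := 2^n with hm
  have hsum : ((2:ℝ)^n * (2/3:ℝ)^n) ≤ ‖psum cSeq m‖ := by
    have him : (psum cSeq m).im = ∑ j ∈ Finset.Icc (0:ℤ) m, bRe j := by
      rw [psum, min_eq_right hp.le, max_eq_left hp.le, Complex.im_sum]
      exact Finset.sum_congr rfl (fun j _ => cSeq_im j)
    have hstep : ∑ j ∈ Finset.Icc (1:ℤ) m, (2/3:ℝ)^n ≤ ∑ j ∈ Finset.Icc (0:ℤ) m, bRe j := by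
      calc ∑ j ∈ Finset.Icc (1:ℤ) m, (2/3:ℝ)^n
          ≤ ∑ j ∈ Finset.Icc (1:ℤ) m, bRe j := by
            apply Finset.sum_le_sum
            intro j hj
            rw [Finset.mem_Icc] at hj
            exact bRe_ge hj.1 hj.2
        _ ≤ ∑ j ∈ Finset.Icc (0:ℤ) m, bRe j :=
            Finset.sum_le_sum_of_subset_of_nonneg
              (Finset.Icc_subset_Icc_left (by norm_num))
              (fun j _ _ => bRe_nonneg j)
    have hcardm : (((Finset.Icc (1:ℤ) m).card : ℝ)) = (2:ℝ)^n := by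
      rw [Int.card_Icc]
      have h5 : (m + 1 - 1) = ((2^n : ℕ) : ℤ) := by rw [hm]; push_cast; ring
      rw [h5, Int.toNat_natCast]; push_cast; ring
    have hconst : ∑ j ∈ Finset.Icc (1:ℤ) m, (2/3:ℝ)^n = (2:ℝ)^n * (2/3:ℝ)^n := by
      rw [Finset.sum_const, nsmul_eq_mul, hcardm]
    calc (2:ℝ)^n * (2/3:ℝ)^n = ∑ j ∈ Finset.Icc (1:ℤ) m, (2/3:ℝ)^n := hconst.symm
      _ ≤ (psum cSeq m).im := by rw [him]; exact hstep
      _ ≤ |(psum cSeq m).im| := le_abs_self _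
      _ ≤ ‖psum cSeq m‖ := by
          exact Complex.abs_im_le_norm _
  have hnatAbs : ((m.natAbs : ℝ)) = (2:ℝ)^n := by
    have h5 : m = ((2^n : ℕ) : ℤ) := by rw [hm]; push_cast; ring
    rw [h5, Int.natAbs_natCast]; push_cast; ring
  have hkey : (1/2:ℝ)*(2/3:ℝ)^n ≤ ‖psum cSeq m‖ / ((m.natAbs:ℝ)+1) := by
    rw [hnatAbs, le_div_iff₀ (by positivity)]
    have h2 : (1:ℝ) ≤ 2^n := one_le_pow₀ (by norm_num)
    nlinarith [pow_pos (by norm_num : (0:ℝ) < 2/3) n]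
  refine le_trans (ENNReal.ofReal_le_ofReal hkey) ?_
  rw [hatAvg]
  exact le_iSup₂ (f := fun (m : ℤ) (_ : (2 ^ n : ℤ) ≤ |m| ∧ |m| < 2 ^ (n + 1)) =>
    ENNReal.ofReal (‖psum cSeq m‖ / ((m.natAbs : ℝ) + 1))) m hcond

lemma gmbar_c : GMBar cSeq := by
  refine ⟨9, by norm_num, ?_⟩
  intro n
  have h1 : ENNReal.ofReal (Theta cSeq n) ≤
      ENNReal.ofReal ((9:ℝ) * ((1/2:ℝ) * (2/3:ℝ)^n)) := by
    apply ENNReal.ofReal_le_ofReal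
    calc Theta cSeq n ≤ (9/2:ℝ) * (2/3:ℝ)^n := theta_bound_s16 n
      _ = (9:ℝ) * ((1/2:ℝ) * (2/3:ℝ)^n) := by ring
  rw [ENNReal.ofReal_mul (by norm_num)] at h1
  refine h1.trans (mul_le_mul_right ?_ _)
  calc ENNReal.ofReal ((1/2:ℝ) * (2/3:ℝ)^n) ≤ hatAvg cSeq n := hat_lower n
    _ = min 1 ((2 : ℝ≥0∞) ^ ((n : ℝ) - (n : ℝ))) * hatAvg cSeq n := by
        rw [sub_self, ENNReal.rpow_zero, min_self, one_mul]
    _ ≤ ⨆ k : ℕ, min 1 ((2 : ℝ≥0∞) ^ ((k : ℝ) - (n : ℝ))) * hatAvg cSeq k :=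
        le_iSup (fun (k : ℕ) => min 1 ((2 : ℝ≥0∞) ^ ((k : ℝ) - (n : ℝ))) * hatAvg cSeq k) n

lemma b_mono : ∀ k : ℤ, 1 ≤ k → bRe (k + 1) ≤ bRe k := by
  intro k hk
  rw [bRe, bRe, if_neg (by omega), if_neg (by omega)]
  apply pow_le_pow_of_le_one (by norm_num) (by norm_num)
  apply Nat.log_mono_right
  omega

lemma abs_neg_one_zpow_real (k : ℤ) : |(-1 : ℝ) ^ k| = 1 := by
  rcases Int.even_or_odd k with h | h
  · rw [h.neg_one_zpow]; simp
  · rw [Odd.neg_one_zpow h]; simp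

lemma aRe_eq {n : ℕ} {k : ℤ} (h1 : (2:ℤ)^n ≤ k) (h2 : k < (2:ℤ)^(n+1)) :
    aRe k = (-1 : ℝ) ^ k * ((2 : ℝ) ^ ((7 / 4 : ℝ) * (n : ℝ)))⁻¹ := by
  have h2n : (0:ℤ) < 2^n := by positivity
  have hc : ∀ m : ℕ, (2:ℤ)^m = ((2^m : ℕ) : ℤ) := by intro m; push_cast; ring
  rw [aRe, if_neg (by omega)]
  have hlog : Nat.log 2 k.toNat = n := by
    have hl : n ≤ Nat.log 2 k.toNat := by
      rw [Nat.le_log_iff_pow_le one_lt_two (by omega)]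
      have := hc n; omega
    have hu : Nat.log 2 k.toNat < n + 1 := by
      rw [Nat.log_lt_iff_lt_pow one_lt_two (by omega)]
      have := hc (n+1); omega
    omega
  rw [hlog]

lemma notGM : ¬ GMseq (fun k => (aRe k : ℂ)) := by
  rintro ⟨C, hC, lam, hlam, H⟩
  obtain ⟨L, hL⟩ : ∃ L : ℕ, lam < 2^L := pow_unbounded_of_one_lt lam one_lt_two
  set D : ℝ := C * lam * (2:ℝ)^((7/4:ℝ)*(L:ℝ)) with hD
  have hDpos : 0 < D := by
    rw [hD]
    have h2 := Real.rpow_pos_of_pos (by norm_num : (0:ℝ) < 2) ((7/4:ℝ)*(L:ℝ))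
    have hlam0 : (0:ℝ) < lam := by linarith
    exact mul_pos (mul_pos hC hlam0) h2
  obtain ⟨N₀, hN₀⟩ : ∃ N₀ : ℕ, D/2 + 1 < 2^N₀ := pow_unbounded_of_one_lt _ one_lt_two
  set N := max N₀ L with hN
  set n : ℕ := 2^N with hn
  have hn1 : 1 ≤ n := Nat.one_le_two_pow
  have hNL : L ≤ N := le_max_right _ _
  have hnR : ((2:ℝ)^N : ℝ) = (n : ℝ) := by rw [hn]; push_cast; ring
  have hnZ : ((2:ℤ)^N : ℤ) = (n : ℤ) := by rw [hn]; push_cast; ring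
  set M : ℝ := ((2 : ℝ) ^ ((7 / 4 : ℝ) * (N : ℝ)))⁻¹ with hM
  have hMpos : 0 < M := by rw [hM]; positivity
  have key := H n hn1
  -- lower bound for LHS
  have hterm : ∀ k : ℤ, (n:ℤ) ≤ k → k ≤ 2*(n:ℤ) - 2 →
      ‖((aRe k : ℂ)) - ((aRe (k+1) : ℂ))‖ = 2 * M := by
    intro k hk1 hk2
    have e1 : aRe k = (-1 : ℝ) ^ k * M := by
      rw [hM]; exact aRe_eq (by omega) (by
        have : (2:ℤ)^(N+1) = 2 * 2^N := by ring
        omega)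
    have e2 : aRe (k+1) = (-1 : ℝ) ^ (k+1) * M := by
      rw [hM]; exact aRe_eq (by omega) (by
        have : (2:ℤ)^(N+1) = 2 * 2^N := by ring
        omega)
    have e3 : ((aRe k : ℂ)) - ((aRe (k+1) : ℂ)) = ((aRe k - aRe (k+1) : ℝ) : ℂ) := by
      push_cast; ring
    rw [e3, Complex.norm_real, Real.norm_eq_abs, e1, e2,
      zpow_add_one₀ (by norm_num : (-1:ℝ) ≠ 0) k]
    have : (-1:ℝ)^k * M - (-1:ℝ)^k * (-1) * M = (-1:ℝ)^k * (2*M) := by ring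
    rw [this, abs_mul, abs_neg_one_zpow_real, one_mul, abs_of_pos (by linarith)]
  have hLHS : ((n:ℝ) - 1) * (2*M) ≤
      ∑ k ∈ Finset.Icc ((n:ℕ) : ℤ) (2 * (n:ℕ)), ‖((aRe k : ℂ)) - ((aRe (k+1) : ℂ))‖ := by
    have hsub : Finset.Icc ((n:ℕ):ℤ) (2*(n:ℕ) - 2) ⊆ Finset.Icc ((n:ℕ):ℤ) (2*(n:ℕ)) :=
      Finset.Icc_subset_Icc_right (by omega)
    have hcd : ((Finset.Icc ((n:ℕ):ℤ) (2*(n:ℕ) - 2)).card : ℝ) = (n:ℝ) - 1 := by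
      rw [Int.card_Icc]
      have h5 : (2*((n:ℕ)):ℤ) - 2 + 1 - (n:ℕ) = ((n - 1 : ℕ) : ℤ) := by push_cast; omega
      rw [h5, Int.toNat_natCast, Nat.cast_sub hn1, Nat.cast_one]
    calc ((n:ℝ) - 1) * (2*M)
        = ∑ k ∈ Finset.Icc ((n:ℕ):ℤ) (2*(n:ℕ) - 2), (2*M) := by
          rw [Finset.sum_const, nsmul_eq_mul, hcd]
      _ = ∑ k ∈ Finset.Icc ((n:ℕ):ℤ) (2*(n:ℕ) - 2), ‖((aRe k : ℂ)) - ((aRe (k+1) : ℂ))‖ := by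
          apply Finset.sum_congr rfl
          intro k hk
          rw [Finset.mem_Icc] at hk
          exact (hterm k hk.1 hk.2).symm
      _ ≤ _ := Finset.sum_le_sum_of_subset_of_nonneg hsub (fun k _ _ => norm_nonneg _)
  -- upper bound for RHS sum
  have hbound : ∀ k : ℤ, k ∈ Finset.Icc ⌈(n : ℝ) / lam⌉ ⌊lam * (n : ℝ)⌋ →
      ‖((aRe k : ℂ))‖ ≤ M * (2:ℝ)^((7/4:ℝ)*(L:ℝ)) := by
    intro k hk
    rw [Finset.mem_Icc] at hk
    have hlam0 : 0 < lam := by linarith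
    have hkR : ((2:ℝ)^(N - L : ℕ) : ℝ) < (k : ℝ) := by
      have h1 : (n : ℝ)/lam ≤ (k : ℝ) := le_trans (Int.le_ceil _) (by exact_mod_cast hk.1)
      have h2 : (n : ℝ)/(2:ℝ)^L < (n:ℝ)/lam := by
        apply div_lt_div_of_pos_left _ hlam0 hL
        rw [← hnR]; positivity
      have h3 : ((2:ℝ)^(N-L:ℕ)) = (n:ℝ)/(2:ℝ)^L := by
        rw [← hnR, eq_div_iff (by positivity), ← pow_add]
        congr 1
        omega
      linarith
    have hkZ : (2:ℤ)^(N-L:ℕ) ≤ k := by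
      have : (((2:ℤ)^(N-L:ℕ) : ℤ) : ℝ) < (k:ℝ) := by push_cast at hkR ⊢; linarith
      exact_mod_cast this.le
    have h4 := abs_aRe_le hkZ
    rw [Complex.norm_real, Real.norm_eq_abs]
    refine h4.trans (le_of_eq ?_)
    rw [hM, ← Real.rpow_neg (by norm_num), ← Real.rpow_neg (by norm_num),
      ← Real.rpow_add (by norm_num)]
    congr 1
    rw [Nat.cast_sub hNL]
    ring
  have hcard : ((Finset.Icc ⌈(n : ℝ) / lam⌉ ⌊lam * (n : ℝ)⌋).card : ℝ) ≤ lam * n := by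
    have hlam0 : 0 < lam := by linarith
    have hceil : 1 ≤ ⌈(n : ℝ) / lam⌉ := by
      apply Int.ceil_pos.mpr
      positivity
    have hflo : ((⌊lam * (n:ℝ)⌋ : ℤ) : ℝ) ≤ lam * n := Int.floor_le _
    rw [Int.card_Icc]
    rcases le_or_gt (⌊lam * (n : ℝ)⌋ + 1 - ⌈(n : ℝ) / lam⌉) 0 with h | h
    · rw [Int.toNat_of_nonpos h, Nat.cast_zero]
      positivity
    · have h6 := Int.toNat_of_nonneg h.le
      have h7 : ((⌊lam * (n:ℝ)⌋ + 1 - ⌈(n:ℝ) / lam⌉).toNat : ℝ)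
          = (⌊lam * (n:ℝ)⌋:ℝ) + 1 - (⌈(n:ℝ)/lam⌉:ℝ) := by
        exact_mod_cast congrArg (Int.cast : ℤ → ℝ) h6
      rw [h7]
      have hceilR : (1:ℝ) ≤ (⌈(n:ℝ)/lam⌉:ℝ) := by exact_mod_cast hceil
      linarith
  have hRHS : (C / n) * ∑ k ∈ Finset.Icc ⌈(n : ℝ) / lam⌉ ⌊lam * (n : ℝ)⌋, ‖((aRe k : ℂ))‖
      ≤ D * M := by
    have hsum : ∑ k ∈ Finset.Icc ⌈(n : ℝ) / lam⌉ ⌊lam * (n : ℝ)⌋, ‖((aRe k : ℂ))‖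
        ≤ (lam * n) * (M * (2:ℝ)^((7/4:ℝ)*(L:ℝ))) := by
      calc ∑ k ∈ Finset.Icc ⌈(n : ℝ) / lam⌉ ⌊lam * (n : ℝ)⌋, ‖((aRe k : ℂ))‖
          ≤ ((Finset.Icc ⌈(n : ℝ) / lam⌉ ⌊lam * (n : ℝ)⌋).card : ℝ)
              * (M * (2:ℝ)^((7/4:ℝ)*(L:ℝ))) := by
            rw [← nsmul_eq_mul]
            exact Finset.sum_le_card_nsmul _ _ _ hbound
        _ ≤ (lam * n) * (M * (2:ℝ)^((7/4:ℝ)*(L:ℝ))) := by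
            apply mul_le_mul_of_nonneg_right hcard
            have := Real.rpow_pos_of_pos (by norm_num : (0:ℝ) < 2) ((7/4:ℝ)*(L:ℝ))
            positivity
    have hnpos : (0:ℝ) < n := by positivity
    calc (C / n) * ∑ k ∈ Finset.Icc ⌈(n : ℝ) / lam⌉ ⌊lam * (n : ℝ)⌋, ‖((aRe k : ℂ))‖
        ≤ (C / n) * ((lam * n) * (M * (2:ℝ)^((7/4:ℝ)*(L:ℝ)))) := by
          apply mul_le_mul_of_nonneg_left hsum
          positivity
      _ = D * M := by
          rw [hD]
          field_simp
  have hmain : ((n:ℝ) - 1) * (2*M) ≤ D * M := le_trans hLHS (le_trans key hRHS)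
  have hnbig : D/2 + 1 < (n:ℝ) := by
    calc D/2 + 1 < (2:ℝ)^N₀ := hN₀
      _ ≤ (2:ℝ)^N := by
        apply pow_le_pow_right₀ (by norm_num)
        exact le_max_left _ _
      _ = (n:ℝ) := hnR
  nlinarith

/-- Compensatory effect: `{a_k}_{k≥1} ∉ GM`, `{b_k}_{k≥1}` is nonincreasing
(hence in `GM`), yet `{c_k}_{k∈ℤ} = {a_k + i b_k} ∈ GM-bar`. -/
theorem compensatory_example :
    ¬ GMseq (fun k => (aRe k : ℂ)) ∧
    (∀ k : ℤ, 1 ≤ k → bRe (k + 1) ≤ bRe k) ∧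
    GMBar cSeq :=
  ⟨notGM, b_mono, gmbar_c⟩
end
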